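/- Let n be a positive integer and let G be an n-divisible abelian group, i.e. for every x ∈ G there exists z ∈ G with n·z = x. Let λ be an infinite cardinal and θ a cardinal, and suppose the colouring c : G → θ witnesses G ↛ [λ]^{FSₙ}_θ, i.e. for every X ⊆ G of cardinality λ, c takes every value below θ on FSₙ(X). Then c also witnesses G ↛ [λ]^{FS_{n+1}}_θ, i.e. for every X ⊆ G of cardinality λ, c takes every value below θ on FS_{n+1}(X). -/

import Mathlib

open Cardinal

universe u

theorem stmt_14 {G : Type u} [AddCommGroup G] (n : ℕ) (hn : 0 < n)
    (hdiv : ∀ x : G, ∃ z : G, n • z = x)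
    (lam θ : Cardinal.{u}) (hlam : ℵ₀ ≤ lam)
    (c : G → θ.ord.ToType)
    (hyp : ∀ X : Set G, Cardinal.mk X = lam →
      ∀ δ : θ.ord.ToType, ∃ x : Fin n → G, Function.Injective x ∧
        (∀ i, x i ∈ X) ∧ c (∑ i, x i) = δ) :
    ∀ X : Set G, Cardinal.mk X = lam →
      ∀ δ : θ.ord.ToType, ∃ x : Fin (n + 1) → G, Function.Injective x ∧
        (∀ i, x i ∈ X) ∧ c (∑ i, x i) = δ := by
  intro X hX δ
  -- X is nonempty
  have hXne : X.Nonempty := by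
    rw [Set.nonempty_iff_ne_empty]
    intro h
    rw [h] at hX
    simp at hX
    rw [← hX] at hlam; rw [le_zero_iff] at hlam
    exact Cardinal.aleph0_ne_zero hlam
  obtain ⟨y0, hy0⟩ := hXne
  obtain ⟨w, hw⟩ := hdiv y0
  set Y : Set G := (fun x => x + w) '' (X \ {y0}) with hYdef
  have hdiffcard : Cardinal.mk (X \ {y0} : Set G) = lam := by
    have h1 : Cardinal.mk (X \ {y0} : Set G) + Cardinal.mk ({y0} : Set G) = Cardinal.mk X :=
      Cardinal.mk_diff_add_mk (by simpa using hy0)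
    rw [Cardinal.mk_singleton, hX] at h1
    have hinf : ℵ₀ ≤ Cardinal.mk (X \ {y0} : Set G) := by
      by_contra hlt
      push_neg at hlt
      have : Cardinal.mk (X \ {y0} : Set G) + 1 < ℵ₀ :=
        Cardinal.add_lt_aleph0 hlt Cardinal.one_lt_aleph0
      rw [h1] at this
      exact absurd hlam (not_le.mpr this)
    rw [← h1]
    exact (Cardinal.add_one_eq hinf).symm
  have hY : Cardinal.mk Y = lam := by
    rw [hYdef, Cardinal.mk_image_eq (add_left_injective w)]
    exact hdiffcard
  obtain ⟨y, hyinj, hymem, hysum⟩ := hyp Y hY δ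
  -- each y i = t + w with t ∈ X \ {y0}
  have hsub : ∀ i, y i - w ∈ X \ ({y0} : Set G) := by
    intro i
    obtain ⟨t, ht, hty⟩ := hymem i
    have : y i - w = t := by rw [← hty]; simp
    rw [this]; exact ht
  refine ⟨Fin.cons y0 (fun i => y i - w), ?_, ?_, ?_⟩
  · intro i j h
    induction i using Fin.cases with
    | zero =>
      induction j using Fin.cases with
      | zero => rfl
      | succ j' =>
        exfalso
        simp only [Fin.cons_zero, Fin.cons_succ] at h
        exact (hsub j').2 (by simpa using h.symm)
    | succ i' =>
      induction j using Fin.cases with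
      | zero =>
        exfalso
        simp only [Fin.cons_zero, Fin.cons_succ] at h
        exact (hsub i').2 (by simpa using h)
      | succ j' =>
        simp only [Fin.cons_succ] at h
        exact congrArg Fin.succ (hyinj (sub_left_injective h))
  · intro i
    refine Fin.cases ?_ ?_ i
    · simpa using hy0
    · intro i'
      simpa using (hsub i').1
  · have hsum : ∑ i, Fin.cons y0 (fun i => y i - w) i = ∑ i, y i := by
      rw [Fin.sum_cons]
      rw [Finset.sum_sub_distrib]
      rw [Finset.sum_const, Finset.card_univ, Fintype.card_fin, hw]
      abel
    rw [hsum]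
    exact hysum
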